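/- With T = 𝔽₂[a_σ, a_λ, w][u_σ^{±1}, u_λ^{±1}]/(a_σ²) and e_u = u_σ u_λ w, e_λ = u_λ w², e_a = u_σ u_λ w³ + u_σ a_λ w, e_ρ = u_σ u_λ w⁴ + a_σ u_λ w³ + u_σ a_λ w² + a_σ a_λ w, one has e_a² = u_σ·e_λ·e_ρ + a_σ u_σ⁻¹·e_u·e_ρ + u_σ a_λ·e_ρ + a_σ a_λ·e_a. -/

import Mathlib

noncomputable section

namespace StmtT

/-- The Laurent/polynomial ring `𝔽₂[a_σ, a_λ, w][u_σ^{±1}, u_λ^{±1}]`, realized as the group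
algebra of `ℤ × ℤ` (the exponents of `u_σ` and `u_λ`) over `𝔽₂[a_σ, a_λ, w]`. -/
abbrev L : Type := AddMonoidAlgebra (MvPolynomial (Fin 3) (ZMod 2)) (ℤ × ℤ)

def asL : L := AddMonoidAlgebra.single (0, 0) (MvPolynomial.X 0)

/-- `T = 𝔽₂[a_σ, a_λ, w][u_σ^{±1}, u_λ^{±1}]/(a_σ²)`. -/
abbrev T : Type := L ⧸ Ideal.span ({asL ^ 2} : Set L)

def q : L →+* T := Ideal.Quotient.mk _

/-- `a_σ` -/
def as : T := q asL
/-- `a_λ` -/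
def al : T := q (AddMonoidAlgebra.single (0, 0) (MvPolynomial.X 1))
/-- `w` -/
def w : T := q (AddMonoidAlgebra.single (0, 0) (MvPolynomial.X 2))
/-- `u_σ` -/
def us : T := q (AddMonoidAlgebra.single (1, 0) 1)
/-- `u_σ⁻¹` -/
def usInv : T := q (AddMonoidAlgebra.single (-1, 0) 1)
/-- `u_λ` -/
def ul : T := q (AddMonoidAlgebra.single (0, 1) 1)
/-- `u_λ⁻¹` -/
def ulInv : T := q (AddMonoidAlgebra.single (0, -1) 1)

/-- `e_u = u_σ u_λ w` -/
def eu : T := us * ul * w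
/-- `e_λ = u_λ w²` -/
def el : T := ul * w ^ 2
/-- `e_a = u_σ u_λ w³ + u_σ a_λ w` -/
def ea : T := us * ul * w ^ 3 + us * al * w
/-- `e_ρ = u_σ u_λ w⁴ + a_σ u_λ w³ + u_σ a_λ w² + a_σ a_λ w` -/
def er : T := us * ul * w ^ 4 + as * ul * w ^ 3 + us * al * w ^ 2 + as * al * w


end StmtT
open StmtT in
theorem aux_h1 : as ^ 2 = 0 := by
  unfold as
  rw [← map_pow]
  exact Ideal.Quotient.eq_zero_iff_mem.mpr (Ideal.subset_span rfl)

open StmtT in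
theorem aux_h2 : usInv * us = 1 := by
  unfold usInv us q
  rw [← map_mul, AddMonoidAlgebra.single_mul_single]
  norm_num
  rw [← Prod.zero_eq_mk, ← AddMonoidAlgebra.one_def, map_one]

open StmtT in
theorem aux_htwo : (2 : T) = 0 := by
  have : (2 : T) = algebraMap (ZMod 2) T 2 := (map_ofNat (algebraMap (ZMod 2) T) 2).symm
  rw [this, show (2 : ZMod 2) = 0 from rfl, map_zero]

/-- In `T`: `e_a² = u_σ·e_λ·e_ρ + a_σ u_σ⁻¹·e_u·e_ρ + u_σ a_λ·e_ρ + a_σ a_λ·e_a`. -/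
theorem stmt10 : StmtT.ea ^ 2 = StmtT.us * StmtT.el * StmtT.er +
    StmtT.as * StmtT.usInv * StmtT.eu * StmtT.er + StmtT.us * StmtT.al * StmtT.er +
    StmtT.as * StmtT.al * StmtT.ea := by
  simp only [StmtT.ea, StmtT.el, StmtT.er, StmtT.eu]
  linear_combination (-(StmtT.ul^2*StmtT.w^4 + StmtT.al*StmtT.ul*StmtT.w^2)) * aux_h1 +
    (-(StmtT.as*StmtT.us*StmtT.ul^2*StmtT.w^5 + 2*StmtT.as*StmtT.us*StmtT.al*StmtT.ul*StmtT.w^3 +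
      StmtT.as*StmtT.us*StmtT.al^2*StmtT.w)) * aux_htwo +
    (-(StmtT.as*StmtT.ul*StmtT.w*(StmtT.us * StmtT.ul * StmtT.w ^ 4 + StmtT.as * StmtT.ul * StmtT.w ^ 3 + StmtT.us * StmtT.al * StmtT.w ^ 2 + StmtT.as * StmtT.al * StmtT.w))) * aux_h2
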